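/- Let (X, Y) be a random pair in ℝ^d × ℝ such that Y = ⟨w*, X⟩ almost surely for some w* ∈ ℝ^d, and such that P(⟨w, X⟩ = 0) = 1 only if w = 0. Let ρ = sup_{w ∈ ℝ^d \ {0}} P(⟨w, X⟩ = 0) and let (X_i, Y_i)_{i=1}^n be n ≥ d i.i.d. copies of (X, Y). Then for every p ∈ (1, ∞) and every empirical risk minimizer ŵ_p, P(ŵ_p ≠ w*) ≤ C(n, d−1) · ρ^{n−d+1}, where C(n, d−1) is the binomial coefficient n choose d−1. -/

import Mathlib

open MeasureTheory ProbabilityTheory Finset Submodule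
open scoped RealInnerProductSpace
open InnerProductSpace

instance fin_wflt (m : ℕ) : WellFoundedLT (Fin m) := inferInstance

noncomputable def padFam {d N : ℕ} (a : Fin N → EuclideanSpace ℝ (Fin d))
    (i : Fin (N + d)) : EuclideanSpace ℝ (Fin d) :=
  if h : (i : ℕ) < N then a ⟨i, h⟩
  else EuclideanSpace.single ⟨(i : ℕ) - N, by have := i.isLt; omega⟩ 1

noncomputable def gsFam {d N : ℕ} (a : Fin N → EuclideanSpace ℝ (Fin d))
    (i : Fin (N + d)) : EuclideanSpace ℝ (Fin d) :=
  gramSchmidt ℝ (padFam a) i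

noncomputable def orthVec {d N : ℕ} (a : Fin N → EuclideanSpace ℝ (Fin d)) :
    EuclideanSpace ℝ (Fin d) :=
  ∑ i ∈ univ.filter (fun i : Fin (N + d) => N ≤ (i : ℕ)), gsFam a i

lemma measurable_padFam {d N : ℕ} (i : Fin (N + d)) :
    Measurable fun a : Fin N → EuclideanSpace ℝ (Fin d) => padFam a i := by
  unfold padFam
  split_ifs with h
  · exact measurable_pi_apply _
  · exact measurable_const

lemma measurable_gsFam_aux {d N : ℕ} (k : ℕ) : ∀ (i : Fin (N + d)), (i : ℕ) = k →
    Measurable fun a : Fin N → EuclideanSpace ℝ (Fin d) => gsFam a i := by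
  induction k using Nat.strongRecOn with
  | ind k ihk =>
    intro i hik
    have ih : ∀ j : Fin (N + d), j < i →
        Measurable fun a : Fin N → EuclideanSpace ℝ (Fin d) => gsFam a j := by
      intro j hj
      exact ihk (j : ℕ) (by rw [← hik]; exact hj) j rfl
    have hrw : (fun a : Fin N → EuclideanSpace ℝ (Fin d) => gsFam a i) = fun a =>
        padFam a i - ∑ k ∈ Finset.Iio i,
          (⟪gsFam a k, padFam a i⟫ / ((‖gsFam a k‖ : ℝ) ^ 2)) • gsFam a k := by
      funext a
      rw [gsFam, gramSchmidt_def]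
      congr 1
      refine Finset.sum_congr rfl fun k _ => ?_
      rw [starProjection_singleton]
      norm_num [gsFam]
    rw [hrw]
    refine (measurable_padFam i).sub (Finset.measurable_sum _ fun k hk => ?_)
    have hk' : k < i := Finset.mem_Iio.mp hk
    exact (((ih k hk').inner (measurable_padFam i)).div
      (((ih k hk').norm).pow measurable_const)).smul (ih k hk')

lemma measurable_gsFam {d N : ℕ} (i : Fin (N + d)) :
    Measurable fun a : Fin N → EuclideanSpace ℝ (Fin d) => gsFam a i :=
  measurable_gsFam_aux (i : ℕ) i rfl

lemma measurable_orthVec {d N : ℕ} :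
    Measurable fun a : Fin N → EuclideanSpace ℝ (Fin d) => orthVec a :=
  Finset.measurable_sum _ fun i _ => measurable_gsFam i

lemma gsFam_eq {d N : ℕ} (a : Fin N → EuclideanSpace ℝ (Fin d)) :
    gsFam a = gramSchmidt ℝ (padFam a) := rfl

lemma orthVec_inner {d N : ℕ} (a : Fin N → EuclideanSpace ℝ (Fin d)) (j : Fin N) :
    ⟪orthVec a, a j⟫ = 0 := by
  have hjlt : (j : ℕ) < N + d := by have := j.isLt; omega
  have hpa : padFam a ⟨(j : ℕ), hjlt⟩ = a j := by
    rw [padFam, dif_pos (show (((⟨(j : ℕ), hjlt⟩ : Fin (N + d)) : ℕ) < N) from j.isLt)]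
  rw [orthVec, sum_inner]
  refine Finset.sum_eq_zero fun i hi => ?_
  have hNi : N ≤ (i : ℕ) := (Finset.mem_filter.mp hi).2
  have hmem : a j ∈ span ℝ (gramSchmidt ℝ (padFam a) '' Set.Iic ⟨(j : ℕ), hjlt⟩) := by
    rw [← hpa]; exact mem_span_gramSchmidt ℝ (padFam a) le_rfl
  have hker : span ℝ (gramSchmidt ℝ (padFam a) '' Set.Iic ⟨(j : ℕ), hjlt⟩) ≤
      LinearMap.ker ((innerSL ℝ (gsFam a i) : EuclideanSpace ℝ (Fin d) →ₗ[ℝ] ℝ)) := by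
    rw [Submodule.span_le]
    rintro u ⟨k, hk, rfl⟩
    have hki : i ≠ k := by
      rw [Set.mem_Iic] at hk
      have hk2 : (k : ℕ) ≤ (j : ℕ) := hk
      have hj2 : (j : ℕ) < N := j.isLt
      intro h; rw [← h] at hk2; omega
    have := gramSchmidt_orthogonal ℝ (padFam a) hki
    simpa [LinearMap.mem_ker, gsFam_eq] using this
  have := hker hmem
  simpa [LinearMap.mem_ker] using this

lemma orthVec_ne_zero {d N : ℕ} (hN : N < d) (a : Fin N → EuclideanSpace ℝ (Fin d)) :
    orthVec a ≠ 0 := by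
  classical
  intro h0
  have hz : ∀ i ∈ univ.filter (fun i : Fin (N + d) => N ≤ (i : ℕ)), gsFam a i = 0 := by
    have hsum : ∑ i ∈ univ.filter (fun i : Fin (N + d) => N ≤ (i : ℕ)), ‖gsFam a i‖ ^ 2 = 0 := by
      have h1 : ⟪orthVec a, orthVec a⟫ = 0 := by rw [h0]; simp
      rw [orthVec, sum_inner] at h1
      rw [← h1]
      refine Finset.sum_congr rfl fun i hi => ?_
      rw [inner_sum, Finset.sum_eq_single i]
      · exact (real_inner_self_eq_norm_sq _).symm
      · intro k _ hne
        exact gramSchmidt_orthogonal ℝ (padFam a) hne.symm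
      · intro h; exact absurd hi h
    intro i hi
    have hnn : ∀ k ∈ univ.filter (fun i : Fin (N + d) => N ≤ (i : ℕ)),
        (0:ℝ) ≤ ‖gsFam a k‖ ^ 2 := fun k _ => sq_nonneg _
    have := (Finset.sum_eq_zero_iff_of_nonneg hnn).mp hsum i hi
    exact norm_eq_zero.mp (sq_eq_zero_iff.mp this)
  set T : Finset (EuclideanSpace ℝ (Fin d)) :=
    (univ : Finset (Fin N)).image (fun j => gsFam a (Fin.castAdd d j)) with hT
  have hsub : Set.range (gramSchmidt ℝ (padFam a)) ⊆ insert 0 ↑T := by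
    rintro u ⟨i, rfl⟩
    by_cases h : (i : ℕ) < N
    · refine Set.mem_insert_iff.mpr (Or.inr ?_)
      rw [hT]
      refine Finset.mem_coe.mpr (Finset.mem_image.mpr ⟨⟨(i : ℕ), h⟩, Finset.mem_univ _, ?_⟩)
      rw [← gsFam_eq a]
      congr 1
    · refine Set.mem_insert_iff.mpr (Or.inl ?_)
      rw [← gsFam_eq a]
      exact hz i (Finset.mem_filter.mpr ⟨Finset.mem_univ _, le_of_not_gt h⟩)
  have htop : span ℝ (Set.range (padFam a)) = ⊤ := by
    rw [eq_top_iff, ← (EuclideanSpace.basisFun (Fin d) ℝ).toBasis.span_eq]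
    refine Submodule.span_mono ?_
    rintro _ ⟨j, rfl⟩
    refine Set.mem_range.mpr ⟨⟨N + (j : ℕ), by have := j.isLt; omega⟩, ?_⟩
    rw [padFam, dif_neg (by simp)]
    rw [OrthonormalBasis.coe_toBasis, EuclideanSpace.basisFun_apply]
    refine congrArg (fun k : Fin d => EuclideanSpace.single k 1) (Fin.ext ?_)
    simp
  have h1 : (⊤ : Submodule ℝ (EuclideanSpace ℝ (Fin d))) ≤ span ℝ (insert 0 ↑T) := by
    rw [← htop, ← span_gramSchmidt ℝ (padFam a)]
    exact Submodule.span_mono hsub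
  rw [span_insert_zero] at h1
  have hTtop : span ℝ (↑T : Set (EuclideanSpace ℝ (Fin d))) = ⊤ := top_unique h1
  have h3 : Module.finrank ℝ (span ℝ (↑T : Set (EuclideanSpace ℝ (Fin d)))) ≤ T.card := by
    simpa [Set.finrank] using finrank_span_finset_le_card (R := ℝ) T
  rw [hTtop, finrank_top, finrank_euclideanSpace_fin] at h3
  have h4 : T.card ≤ N := by
    rw [hT]
    exact le_trans Finset.card_image_le (by simp)
  omega

noncomputable def coverSet (d n : ℕ) (S : Finset (Fin n)) :
    Set (Fin n → EuclideanSpace ℝ (Fin d)) :=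
  if hS : S.card = d - 1 then
    (MeasurableEquiv.piEquivPiSubtypeProd (fun _ : Fin n => EuclideanSpace ℝ (Fin d))
      (fun i => i ∈ S)) ⁻¹'
    {q : ({i : Fin n // i ∈ S} → EuclideanSpace ℝ (Fin d)) ×
         ({i : Fin n // ¬ i ∈ S} → EuclideanSpace ℝ (Fin d)) |
      ∀ i, ⟪orthVec (fun k : Fin (d-1) => q.1 ((S.orderIsoOfFin hS) k)), q.2 i⟫ = 0}
  else ∅

/-- realizable case (Theorem `thm:realizable`, first part): if `Y = ⟨w*, X⟩`
almost surely and `n ≥ d`, then any empirical risk minimizer `ŵ_p` for the `p`-th power loss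
satisfies `P(ŵ_p ≠ w*) ≤ (n choose (d-1)) ρ^{n-d+1}`, where
`ρ = sup_{w ≠ 0} P(⟨w, X⟩ = 0)`. -/
theorem realizable_exact_recovery
    {Ω : Type*} [MeasurableSpace Ω] (P : Measure Ω) [IsProbabilityMeasure P]
    {d n : ℕ} (hnd : n ≥ d)
    (X : Ω → Fin d → ℝ) (Y : Ω → ℝ) (hX : Measurable X) (hY : Measurable Y)
    (wstar : Fin d → ℝ) (hreal : ∀ᵐ ω ∂P, Y ω = ∑ j, wstar j * X ω j)
    (hnondeg : ∀ w : Fin d → ℝ, P {ω | ∑ j, w j * X ω j = 0} = 1 → w = 0)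
    (ρ : ℝ)
    (hρ : ρ = ⨆ w : {w : Fin d → ℝ // w ≠ 0},
      (P {ω | ∑ j, w.1 j * X ω j = 0}).toReal)
    -- i.i.d. samples distributed as (X, Y)
    (XY : Fin n → Ω → (Fin d → ℝ) × ℝ)
    (hmeas : ∀ i, Measurable (XY i))
    (hindep : iIndepFun XY P)
    (hident : ∀ i, IdentDistrib (XY i) (fun ω => (X ω, Y ω)) P P)
    (p : ℝ) (hp : 1 < p)
    -- empirical risk minimizer for the p-th power loss
    (what : Ω → Fin d → ℝ) (hwhat : Measurable what)
    (hERM : ∀ ω, ∀ w : Fin d → ℝ,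
      (1 / n : ℝ) * ∑ i, |∑ j, what ω j * (XY i ω).1 j - (XY i ω).2| ^ p / (p * (p - 1)) ≤
      (1 / n : ℝ) * ∑ i, |∑ j, w j * (XY i ω).1 j - (XY i ω).2| ^ p / (p * (p - 1))) :
    P {ω | what ω ≠ wstar} ≤ ENNReal.ofReal ((n.choose (d - 1)) * ρ ^ (n - d + 1)) := by
  classical
  rcases Nat.eq_zero_or_pos d with hd0 | hd
  · subst hd0
    have he : {ω | what ω ≠ wstar} = ∅ := by
      ext ω
      simp only [Set.mem_setOf_eq, Set.mem_empty_iff_false, iff_false, not_not]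
      exact funext fun j => absurd j.isLt (by omega)
    rw [he, measure_empty]
    exact zero_le
  have hρ0 : 0 ≤ ρ := hρ ▸ Real.iSup_nonneg fun w => ENNReal.toReal_nonneg
  have hp0 : (0:ℝ) < p := lt_trans one_pos hp
  have hn1 : 1 ≤ n := le_trans hd hnd
  -- transfer to EuclideanSpace
  let c : (Fin d → ℝ) → EuclideanSpace ℝ (Fin d) :=
    fun x => (MeasurableEquiv.toLp 2 (Fin d → ℝ)) x
  have hc : Measurable c := (MeasurableEquiv.toLp 2 (Fin d → ℝ)).measurable
  have hcinner : ∀ (v : EuclideanSpace ℝ (Fin d)) (x : Fin d → ℝ),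
      ⟪v, c x⟫ = ∑ j, v j * x j := by
    intro v x
    rw [PiLp.inner_apply]
    exact Finset.sum_congr rfl fun j _ => by simp [c, mul_comm]
  let Z : Fin n → Ω → EuclideanSpace ℝ (Fin d) := fun i ω => c (XY i ω).1
  have hZmeas : ∀ i, Measurable (Z i) := fun i => hc.comp (measurable_fst.comp (hmeas i))
  let X' : Ω → EuclideanSpace ℝ (Fin d) := fun ω => c (X ω)
  have hX' : Measurable X' := hc.comp hX
  let μ : Measure (EuclideanSpace ℝ (Fin d)) := P.map X'
  haveI : IsProbabilityMeasure μ := Measure.isProbabilityMeasure_map hX'.aemeasurable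
  have hident' : ∀ i, IdentDistrib (Z i) X' P P :=
    fun i => (hident i).comp (hc.comp measurable_fst)
  have hindep' : iIndepFun Z P :=
    hindep.comp (fun _ => c ∘ Prod.fst) (fun _ => hc.comp measurable_fst)
  let J : Ω → (Fin n → EuclideanSpace ℝ (Fin d)) := fun ω i => Z i ω
  have hJ : Measurable J := measurable_pi_lambda _ fun i => hZmeas i
  have hmap : P.map J = Measure.pi (fun _ : Fin n => μ) := by
    refine (Measure.pi_eq fun s hs => ?_).symm
    rw [Measure.map_apply hJ (MeasurableSet.univ_pi hs)]
    have hpre : J ⁻¹' Set.pi Set.univ s = ⋂ i ∈ (Finset.univ : Finset (Fin n)), Z i ⁻¹' s i := by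
      ext ω
      simp [J, Set.mem_pi]
    rw [hpre, hindep'.measure_inter_preimage_eq_mul Finset.univ (fun i _ => hs i)]
    exact Finset.prod_congr rfl fun i _ => by
      rw [(hident' i).measure_mem_eq (hs i), Measure.map_apply hX' (hs i)]
  -- hyperplane measure bound
  have hHle : ∀ v : EuclideanSpace ℝ (Fin d), v ≠ 0 →
      μ {y | ⟪v, y⟫ = 0} ≤ ENNReal.ofReal ρ := by
    intro v hv
    have hmeasH : MeasurableSet {y : EuclideanSpace ℝ (Fin d) | ⟪v, y⟫ = 0} :=
      measurableSet_eq_fun (measurable_const.inner measurable_id) measurable_const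
    have hpre : X' ⁻¹' {y | ⟪v, y⟫ = 0} = {ω | ∑ j, (fun j => v j) j * X ω j = 0} := by
      ext ω
      simp only [Set.mem_preimage, Set.mem_setOf_eq]
      rw [hcinner]
    have hvfun : (fun j => v j) ≠ (0 : Fin d → ℝ) := by
      intro h
      apply hv
      ext j
      exact congrFun h j
    have hbdd : BddAbove (Set.range fun w : {w : Fin d → ℝ // w ≠ 0} =>
        (P {ω | ∑ j, w.1 j * X ω j = 0}).toReal) := by
      refine ⟨1, ?_⟩
      rintro _ ⟨w, rfl⟩
      have h1 : P {ω | ∑ j, w.1 j * X ω j = 0} ≤ 1 := prob_le_one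
      have := ENNReal.toReal_mono ENNReal.one_ne_top h1
      simpa using this
    have hle : (P {ω | ∑ j, (fun j => v j) j * X ω j = 0}).toReal ≤ ρ := by
      rw [hρ]
      exact le_ciSup hbdd (⟨fun j => v j, hvfun⟩ : {w : Fin d → ℝ // w ≠ 0})
    calc μ {y | ⟪v, y⟫ = 0} = P {ω | ∑ j, (fun j => v j) j * X ω j = 0} := by
          rw [Measure.map_apply hX' hmeasH, hpre]
      _ = ENNReal.ofReal (P {ω | ∑ j, (fun j => v j) j * X ω j = 0}).toReal :=
          (ENNReal.ofReal_toReal (measure_ne_top P _)).symm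
      _ ≤ ENNReal.ofReal ρ := ENNReal.ofReal_le_ofReal hle
  -- good event
  have hG : ∀ᵐ ω ∂P, ∀ i, (XY i ω).2 = ∑ j, wstar j * (XY i ω).1 j := by
    rw [ae_all_iff]
    intro i
    have hS : MeasurableSet {q : (Fin d → ℝ) × ℝ | q.2 = ∑ j, wstar j * q.1 j} :=
      measurableSet_eq_fun measurable_snd
        (Finset.measurable_sum _ fun j _ =>
          measurable_const.mul ((measurable_pi_apply j).comp measurable_fst))
    have h1 : P ((fun ω => (X ω, Y ω)) ⁻¹' {q : (Fin d → ℝ) × ℝ |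
        q.2 = ∑ j, wstar j * q.1 j}ᶜ) = 0 := ae_iff.mp hreal
    have h2 : P (XY i ⁻¹' {q : (Fin d → ℝ) × ℝ | q.2 = ∑ j, wstar j * q.1 j}ᶜ) = 0 := by
      rw [(hident i).measure_mem_eq hS.compl]
      exact h1
    exact ae_iff.mpr h2
  -- bad set
  set Abad : Set (Fin n → EuclideanSpace ℝ (Fin d)) :=
    {x | ∃ v, v ≠ 0 ∧ ∀ i, ⟪v, x i⟫ = 0} with hAbad
  have hsub1 : {ω | what ω ≠ wstar} ⊆ (J ⁻¹' Abad) ∪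
      {ω | ¬ ∀ i, (XY i ω).2 = ∑ j, wstar j * (XY i ω).1 j} := by
    intro ω hω
    by_cases hGω : ∀ i, (XY i ω).2 = ∑ j, wstar j * (XY i ω).1 j
    · left
      have hRHS : (1 / n : ℝ) * ∑ i, |∑ j, wstar j * (XY i ω).1 j - (XY i ω).2| ^ p
          / (p * (p - 1)) = 0 := by
        rw [Finset.sum_eq_zero, mul_zero]
        intro i _
        rw [← hGω i, sub_self, abs_zero, Real.zero_rpow (ne_of_gt hp0), zero_div]
      have hle0 := hERM ω wstar
      rw [hRHS] at hle0
      have hterm : ∀ i ∈ (Finset.univ : Finset (Fin n)),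
          (0:ℝ) ≤ |∑ j, what ω j * (XY i ω).1 j - (XY i ω).2| ^ p / (p * (p - 1)) :=
        fun i _ => div_nonneg (Real.rpow_nonneg (abs_nonneg _) p)
          (le_of_lt (mul_pos hp0 (by linarith)))
      have hnpos : (0:ℝ) < 1 / n := by
        have : (0:ℝ) < n := by exact_mod_cast hn1
        positivity
      have hsumle : ∑ i, |∑ j, what ω j * (XY i ω).1 j - (XY i ω).2| ^ p / (p * (p - 1)) ≤ 0 :=
        (mul_le_mul_iff_right₀ hnpos).mp (by rw [mul_zero]; exact hle0)
      have hsum0 := (Finset.sum_eq_zero_iff_of_nonneg hterm).mp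
        (le_antisymm hsumle (Finset.sum_nonneg hterm))
      have heq : ∀ i, ∑ j, what ω j * (XY i ω).1 j = (XY i ω).2 := by
        intro i
        have h3 := hsum0 i (Finset.mem_univ i)
        have hd0 : p * (p - 1) ≠ 0 := ne_of_gt (mul_pos hp0 (by linarith))
        rw [div_eq_zero_iff] at h3
        rcases h3 with h3 | h3
        · have := (Real.rpow_eq_zero_iff_of_nonneg (abs_nonneg _)).mp h3
          have habs : |∑ j, what ω j * (XY i ω).1 j - (XY i ω).2| = 0 := this.1
          have := abs_eq_zero.mp habs
          linarith [sub_eq_zero.mp this]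
        · exact absurd h3 hd0
      refine ⟨c (what ω - wstar), ?_, ?_⟩
      · intro h
        exact (sub_ne_zero.mpr hω)
          ((MeasurableEquiv.toLp 2 (Fin d → ℝ)).injective h)
      · intro i
        rw [hcinner]
        have hcj : ∀ (x : Fin d → ℝ) (j : Fin d), c x j = x j := fun _ _ => rfl
        simp only [hcj]
        have : ∑ j, (what ω - wstar) j * (XY i ω).1 j
            = (∑ j, what ω j * (XY i ω).1 j) - ∑ j, wstar j * (XY i ω).1 j := by
          rw [← Finset.sum_sub_distrib]
          exact Finset.sum_congr rfl fun j _ => by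
            rw [Pi.sub_apply, sub_mul]
        rw [this, heq i, ← hGω i, sub_self]
    · right
      exact hGω
    -- covering
  have hcover : Abad ⊆ ⋃ S ∈ Finset.powersetCard (d-1) (Finset.univ : Finset (Fin n)),
      coverSet d n S := by
    rintro x ⟨v, hv, hvx⟩
    obtain ⟨t, hts, hspan, hli⟩ := exists_linearIndependent ℝ (Set.range x)
    have htfin : t.Finite := (Set.finite_range x).subset hts
    letI := htfin.fintype
    have htK : t ⊆ ↑((ℝ ∙ v)ᗮ) := by
      intro u hu
      rcases hts hu with ⟨i, rfl⟩
      exact Submodule.mem_orthogonal_singleton_iff_inner_right.mpr (hvx i)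
    have h1 : Module.finrank ℝ (span ℝ t) = t.toFinset.card := finrank_span_set_eq_card hli
    have h2 : span ℝ t ≤ (ℝ ∙ v)ᗮ := Submodule.span_le.mpr htK
    have h3 : Module.finrank ℝ ((ℝ ∙ v)ᗮ) = d - 1 := by
      have h4 := Submodule.finrank_add_finrank_orthogonal
        (K := ((ℝ ∙ v) : Submodule ℝ (EuclideanSpace ℝ (Fin d))))
      rw [finrank_span_singleton hv, finrank_euclideanSpace_fin] at h4
      omega
    have hcardt : t.toFinset.card ≤ d - 1 := by
      have h5 := Submodule.finrank_mono h2
      rw [h1, h3] at h5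
      exact h5
    let pick : EuclideanSpace ℝ (Fin d) → Fin n := fun u =>
      if h : ∃ i, x i = u then h.choose else ⟨0, by omega⟩
    let s₀ : Finset (Fin n) := t.toFinset.image pick
    have hxpick : ∀ u ∈ t, x (pick u) = u := by
      intro u hu
      have h : ∃ i, x i = u := hts hu
      simp only [pick, dif_pos h]
      exact h.choose_spec
    have hs₀card : s₀.card ≤ d - 1 := le_trans Finset.card_image_le hcardt
    obtain ⟨S, hs₀S, hSuniv, hScard⟩ := Finset.exists_subsuperset_card_eq
      (Finset.subset_univ s₀) hs₀card
      (by rw [Finset.card_univ, Fintype.card_fin]; omega)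
    refine Set.mem_biUnion (Finset.mem_powersetCard.mpr ⟨Finset.subset_univ S, hScard⟩) ?_
    rw [coverSet, dif_pos hScard]
    intro i
    set w : EuclideanSpace ℝ (Fin d) :=
      orthVec (fun k : Fin (d-1) => x ((S.orderIsoOfFin hScard) k)) with hw
    show ⟪w, x i⟫ = 0
    have hwS : ∀ j ∈ S, ⟪w, x j⟫ = 0 := by
      intro j hj
      have := orthVec_inner (fun k : Fin (d-1) => x ((S.orderIsoOfFin hScard) k))
        ((S.orderIsoOfFin hScard).symm ⟨j, hj⟩)
      rwa [OrderIso.apply_symm_apply] at this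
    have hker : span ℝ t ≤ LinearMap.ker ((innerSL ℝ w : EuclideanSpace ℝ (Fin d) →ₗ[ℝ] ℝ)) := by
      rw [Submodule.span_le]
      intro u hu
      have hpu : pick u ∈ S := hs₀S (Finset.mem_image_of_mem pick (Set.mem_toFinset.mpr hu))
      have : ⟪w, x (pick u)⟫ = 0 := hwS _ hpu
      rw [hxpick u hu] at this
      simpa [LinearMap.mem_ker] using this
    have hxi : x i ∈ span ℝ t := by
      rw [hspan]
      exact Submodule.subset_span ⟨i, rfl⟩
    simpa [LinearMap.mem_ker] using hker hxi
  -- per-S bound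
  have hASle : ∀ S ∈ Finset.powersetCard (d-1) (Finset.univ : Finset (Fin n)),
      Measure.pi (fun _ : Fin n => μ) (coverSet d n S) ≤ ENNReal.ofReal ρ ^ (n - d + 1) := by
    intro S hS
    have hScard : S.card = d - 1 := (Finset.mem_powersetCard.mp hS).2
    have hcompl : Fintype.card {i : Fin n // ¬ i ∈ S} = n - d + 1 := by
      rw [Fintype.card_subtype_compl, Fintype.card_coe, Fintype.card_fin, hScard]
      omega
    rw [coverSet, dif_pos hScard]
    set B : Set (({i : Fin n // i ∈ S} → EuclideanSpace ℝ (Fin d)) ×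
        ({i : Fin n // ¬ i ∈ S} → EuclideanSpace ℝ (Fin d))) :=
      {q | ∀ i, ⟪orthVec (fun k : Fin (d-1) => q.1 ((S.orderIsoOfFin hScard) k)), q.2 i⟫ = 0}
      with hBdef
    have hBmeas : MeasurableSet B := by
      have hrw : B = ⋂ i : {i : Fin n // ¬ i ∈ S},
          {q : ({i : Fin n // i ∈ S} → EuclideanSpace ℝ (Fin d)) ×
               ({i : Fin n // ¬ i ∈ S} → EuclideanSpace ℝ (Fin d)) |
            ⟪orthVec (fun k : Fin (d-1) => q.1 ((S.orderIsoOfFin hScard) k)), q.2 i⟫ = 0} := by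
        ext q
        simp [hBdef, Set.mem_iInter]
      rw [hrw]
      refine MeasurableSet.iInter fun i => ?_
      refine measurableSet_eq_fun ?_ measurable_const
      exact Measurable.inner
        (measurable_orthVec.comp ((measurable_pi_lambda _ fun k =>
          measurable_pi_apply _).comp measurable_fst))
        ((measurable_pi_apply i).comp measurable_snd)
    rw [(measurePreserving_piEquivPiSubtypeProd (fun _ : Fin n => μ)
      (fun i => i ∈ S)).measure_preimage hBmeas.nullMeasurableSet]
    rw [Measure.prod_apply hBmeas]
    have hslice : ∀ a, (Measure.pi fun _ : {i : Fin n // ¬ i ∈ S} => μ) (Prod.mk a ⁻¹' B)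
        ≤ ENNReal.ofReal ρ ^ (n - d + 1) := by
      intro a
      have hsl : Prod.mk a ⁻¹' B =
          Set.pi Set.univ (fun _ : {i : Fin n // ¬ i ∈ S} =>
            {y | ⟪orthVec (fun k : Fin (d-1) => a ((S.orderIsoOfFin hScard) k)), y⟫ = 0}) := by
        ext b
        simp [hBdef, Set.mem_pi]
      rw [hsl, Measure.pi_pi]
      calc ∏ _i : {i : Fin n // ¬ i ∈ S},
            μ {y | ⟪orthVec (fun k : Fin (d-1) => a ((S.orderIsoOfFin hScard) k)), y⟫ = 0}
          ≤ ∏ _i : {i : Fin n // ¬ i ∈ S}, ENNReal.ofReal ρ :=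
            Finset.prod_le_prod' fun i _ => hHle _ (orthVec_ne_zero (by omega) _)
        _ = ENNReal.ofReal ρ ^ (n - d + 1) := by
            rw [Finset.prod_const, Finset.card_univ, hcompl]
    refine le_trans (lintegral_mono hslice) ?_
    rw [lintegral_const, measure_univ, mul_one]
  have hGnull : P {ω | ¬ ∀ i, (XY i ω).2 = ∑ j, wstar j * (XY i ω).1 j} = 0 := ae_iff.mp hG
  calc P {ω | what ω ≠ wstar}
      ≤ P ((J ⁻¹' Abad) ∪ {ω | ¬ ∀ i, (XY i ω).2 = ∑ j, wstar j * (XY i ω).1 j}) :=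
        measure_mono hsub1
    _ ≤ P (J ⁻¹' Abad) + P {ω | ¬ ∀ i, (XY i ω).2 = ∑ j, wstar j * (XY i ω).1 j} :=
        measure_union_le _ _
    _ = P (J ⁻¹' Abad) := by rw [hGnull, add_zero]
    _ ≤ (P.map J) Abad := Measure.le_map_apply hJ.aemeasurable _
    _ = Measure.pi (fun _ : Fin n => μ) Abad := by rw [hmap]
    _ ≤ Measure.pi (fun _ : Fin n => μ)
        (⋃ S ∈ Finset.powersetCard (d-1) (Finset.univ : Finset (Fin n)), coverSet d n S) :=
        measure_mono hcover
    _ ≤ ∑ S ∈ Finset.powersetCard (d-1) (Finset.univ : Finset (Fin n)),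
        Measure.pi (fun _ : Fin n => μ) (coverSet d n S) := measure_biUnion_finset_le _ _
    _ ≤ ∑ S ∈ Finset.powersetCard (d-1) (Finset.univ : Finset (Fin n)),
        ENNReal.ofReal ρ ^ (n - d + 1) := Finset.sum_le_sum hASle
    _ = (n.choose (d-1)) * ENNReal.ofReal ρ ^ (n - d + 1) := by
        rw [Finset.sum_const, Finset.card_powersetCard, Finset.card_univ, Fintype.card_fin,
          nsmul_eq_mul]
    _ = ENNReal.ofReal ((n.choose (d - 1)) * ρ ^ (n - d + 1)) := by
        rw [ENNReal.ofReal_mul (Nat.cast_nonneg _), ENNReal.ofReal_pow hρ0,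
          ENNReal.ofReal_natCast]
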